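/- Assume in addition that K contains a primitive n-th root of unity ε. Then for every nonzero idempotent c of •_τ, the characteristic polynomial of the K-linear endomorphism L_τ(c) : x ↦ c •_τ x equals X^n − 1; in particular ε, ε², …, ε^n are exactly the eigenvalues of L_τ(c), each eigenvalue is simple (each eigenspace is one-dimensional), and L_τ(c)^n is the identity map of Fin n → K. -/

import Mathlib

open Polynomial in
private lemma aux_eq_prod {K : Type*} [Field K] {n : ℕ} [NeZero n] {ε : K}
    (hε : IsPrimitiveRoot ε n) (q : Polynomial K) (hq : q.Monic) (hd : q.natDegree = n)
    (hr : ∀ μ : K, μ ^ n = 1 → q.IsRoot μ) :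
    q = (((Multiset.range n).map (ε ^ ·)).map (fun a => X - C a)).prod := by
  have hnodup : ((Multiset.range n).map (ε ^ ·)).Nodup :=
    Multiset.Nodup.map_on
      (fun i hi j hj h => hε.pow_inj (Multiset.mem_range.mp hi) (Multiset.mem_range.mp hj) h)
      (Multiset.nodup_range n)
  have hsub : ((Multiset.range n).map (ε ^ ·)) ≤ q.roots := by
    rw [Multiset.le_iff_subset hnodup]
    intro a ha
    obtain ⟨i, hi, rfl⟩ := Multiset.mem_map.mp ha
    exact Polynomial.mem_roots'.mpr ⟨hq.ne_zero,
      hr _ (by rw [← pow_mul, mul_comm, pow_mul, hε.pow_eq_one, one_pow])⟩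
  have hroots : ((Multiset.range n).map (ε ^ ·)) = q.roots :=
    Multiset.eq_of_le_of_card_le hsub (by
      calc Multiset.card q.roots ≤ q.natDegree := q.card_roots'
      _ = Multiset.card ((Multiset.range n).map (ε ^ ·)) := by simp [hd])
  rw [hroots]
  exact (Polynomial.prod_multiset_X_sub_C_of_monic_of_roots_card_eq hq
    (by rw [← hroots, hd]; simp)).symm

open Fin.NatCast in
theorem stmt_13 {K : Type*} [Field K] (n : ℕ) [NeZero n] (hn : 2 ≤ n)
    (ζ : K) (hζ : IsPrimitiveRoot ζ (2 ^ n - 1))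
    (ε : K) (hε : IsPrimitiveRoot ε n)
    (c : Fin n → K) (hc0 : c ≠ 0) (hc : ∀ i : Fin n, c (i + 1) * c (i + 1) = c i)
    (L : (Fin n → K) →ₗ[K] (Fin n → K))
    (hL : ∀ (x : Fin n → K) (i : Fin n), L x i = c (i + 1) * x (i + 1)) :
    L.charpoly = Polynomial.X ^ n - 1 ∧
    (∀ μ : K, Module.End.HasEigenvalue L μ ↔ ∃ p : ℕ, 1 ≤ p ∧ p ≤ n ∧ μ = ε ^ p) ∧
    (∀ p : ℕ, 1 ≤ p → p ≤ n →
      Module.finrank K (Module.End.eigenspace L (ε ^ p)) = 1) ∧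
    (∀ x : Fin n → K, (L ^ n) x = x) := by
  classical
  -- all coordinates of c are nonzero
  have hcne : ∀ i : Fin n, c i ≠ 0 := by
    intro i hi
    apply hc0
    have step : ∀ j : Fin n, c j = 0 → c (j + 1) = 0 := by
      intro j hj
      have h := hc j
      rw [hj] at h
      exact mul_self_eq_zero.mp h
    have hk : ∀ k : ℕ, c (i + (k : Fin n)) = 0 := by
      intro k
      induction k with
      | zero => simpa using hi
      | succ k ih =>
        have h := step _ ih
        have : ((k + 1 : ℕ) : Fin n) = (k : Fin n) + 1 := by push_cast; ring
        rw [this, ← add_assoc]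
        exact h
    funext j
    have h := hk (j - i).val
    rw [Fin.cast_val_eq_self, add_comm, sub_add_cancel] at h
    simpa using h
  -- product of all coordinates is 1
  have hshift1 : ∏ i : Fin n, c (i + 1) = ∏ i : Fin n, c i :=
    Equiv.prod_comp (Equiv.addRight (1 : Fin n)) c
  have hPne : (∏ i : Fin n, c i) ≠ 0 := Finset.prod_ne_zero_iff.mpr fun i _ => hcne i
  have hProd : ∏ i : Fin n, c i = 1 := by
    have hP2 : (∏ i : Fin n, c i) * ∏ i : Fin n, c i = (∏ i : Fin n, c i) * 1 := by
      rw [mul_one]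
      calc (∏ i : Fin n, c i) * ∏ i : Fin n, c i
          = (∏ i : Fin n, c (i + 1)) * ∏ i : Fin n, c (i + 1) := by rw [hshift1]
        _ = ∏ i : Fin n, (c (i + 1) * c (i + 1)) := (Finset.prod_mul_distrib).symm
        _ = ∏ i : Fin n, c i := Finset.prod_congr rfl fun i _ => hc i
    exact mul_left_cancel₀ hPne hP2
  -- power formula for L
  have hLpow : ∀ (k : ℕ) (x : Fin n → K) (i : Fin n),
      (L ^ k) x i = (∏ j ∈ Finset.range k, c (i + (j : Fin n) + 1)) * x (i + (k : Fin n)) := by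
    intro k
    induction k with
    | zero => intro x i; simp
    | succ k ih =>
      intro x i
      rw [pow_succ, Module.End.mul_apply, ih (L x) i, hL, Finset.prod_range_succ]
      have h1 : ((k + 1 : ℕ) : Fin n) = (k : Fin n) + 1 := by push_cast; ring
      rw [h1, ← add_assoc]
      ring
  have hprodfull : ∀ i : Fin n, ∏ j ∈ Finset.range n, c (i + (j : Fin n) + 1) = 1 := by
    intro i
    have h1 : ∏ j : Fin n, c (i + j + 1) = ∏ j ∈ Finset.range n, c (i + (j : Fin n) + 1) := by
      rw [← Fin.prod_univ_eq_prod_range (fun j : ℕ => c (i + (j : Fin n) + 1)) n]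
      simp [Fin.cast_val_eq_self]
    rw [← h1]
    calc ∏ j : Fin n, c (i + j + 1) = ∏ j : Fin n, c ((i + 1) + j) := by
          apply Finset.prod_congr rfl; intro j _; rw [add_right_comm]
      _ = ∏ j : Fin n, c j := Equiv.prod_comp (Equiv.addLeft (i + 1)) c
      _ = 1 := hProd
  have hLn : ∀ x : Fin n → K, (L ^ n) x = x := by
    intro x
    funext i
    rw [hLpow n x i, hprodfull i, Fin.natCast_self, add_zero, one_mul]
  set v : K → Fin n → K := fun μ i =>
    μ ^ (i : ℕ) * (∏ j ∈ Finset.range (i : ℕ), c ((j : Fin n) + 1))⁻¹ with hv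
  have hQne : ∀ k : ℕ, (∏ j ∈ Finset.range k, c ((j : Fin n) + 1)) ≠ 0 :=
    fun k => Finset.prod_ne_zero_iff.mpr fun j _ => hcne _
  have hv0 : ∀ μ : K, v μ 0 = 1 := by
    intro μ; simp [hv]
  have hveq : ∀ μ : K, μ ^ n = 1 → ∀ i : Fin n, c (i + 1) * v μ (i + 1) = μ * v μ i := by
    intro μ hμ i
    rcases Nat.lt_or_ge (i.val + 1) n with h | h
    · have h1v : ((1 : Fin n) : ℕ) = 1 := by
        rw [Fin.val_one']; exact Nat.mod_eq_of_lt hn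
      have hi1 : ((i + 1 : Fin n) : ℕ) = i.val + 1 := by
        rw [Fin.val_add, h1v, Nat.mod_eq_of_lt h]
      have hicast : ((i.val : ℕ) : Fin n) = i := Fin.cast_val_eq_self i
      rw [hv]
      simp only [hi1]
      rw [Finset.prod_range_succ, hicast, pow_succ]
      have := hQne i.val
      have := hcne (i + 1)
      field_simp
    · have hival : (i : ℕ) = n - 1 := by omega
      have h1v : ((1 : Fin n) : ℕ) = 1 := by
        rw [Fin.val_one']; exact Nat.mod_eq_of_lt hn
      have hi1 : i + 1 = 0 := by
        apply Fin.ext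
        rw [Fin.val_add, h1v, hival]
        simp [Nat.sub_add_cancel (by omega : 1 ≤ n)]
      have hsplit : (∏ j ∈ Finset.range (n - 1), c ((j : Fin n) + 1)) * c 0 = 1 := by
        have hfull : ∏ j ∈ Finset.range n, c ((j : Fin n) + 1) = 1 := by
          rw [← Fin.prod_univ_eq_prod_range (fun j : ℕ => c ((j : Fin n) + 1)) n]
          calc ∏ j : Fin n, c (((j : ℕ) : Fin n) + 1) = ∏ j : Fin n, c (j + 1) := by
                apply Finset.prod_congr rfl; intro j _; rw [Fin.cast_val_eq_self]
            _ = 1 := hshift1.trans hProd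
        have hstep := Finset.prod_range_succ (fun j : ℕ => c ((j : Fin n) + 1)) (n - 1)
        rw [show n - 1 + 1 = n from by omega] at hstep
        have hcast : ((n - 1 : ℕ) : Fin n) = i := by rw [← hival, Fin.cast_val_eq_self]
        rw [← hfull, hstep, hcast, hi1]
      have hc0inv : c 0 = (∏ j ∈ Finset.range (n - 1), c ((j : Fin n) + 1))⁻¹ :=
        eq_inv_of_mul_eq_one_right hsplit
      rw [hi1, hv]
      simp only [Fin.val_zero, pow_zero, Finset.range_zero, Finset.prod_empty, inv_one, mul_one,
        one_mul, hival]
      rw [hc0inv, ← mul_assoc, ← pow_succ', show (n - 1) + 1 = n by omega, hμ, one_mul]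
  have hvne : ∀ μ : K, v μ ≠ 0 := by
    intro μ h
    have h1 := hv0 μ
    rw [h] at h1
    simp at h1
  have hLv : ∀ μ : K, μ ^ n = 1 → L (v μ) = μ • v μ := by
    intro μ hμ
    funext i
    rw [hL, hveq μ hμ i]
    simp

  -- charpoly
  have hmonic := LinearMap.charpoly_monic L
  have hdeg : L.charpoly.natDegree = n := by
    rw [LinearMap.charpoly_natDegree]; exact Module.finrank_fin_fun K
  have hEigen : ∀ μ : K, μ ^ n = 1 → Module.End.HasEigenvalue L μ := fun μ hμ =>
    Module.End.hasEigenvalue_of_hasEigenvector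
      (Module.End.hasEigenvector_iff.mpr ⟨Module.End.mem_eigenspace_iff.mpr (hLv μ hμ), hvne μ⟩)
  have hroot : ∀ μ : K, μ ^ n = 1 → L.charpoly.IsRoot μ := fun μ hμ =>
    ((Module.End.hasEigenvalue_iff_isRoot.mp (hEigen μ hμ)).dvd (LinearMap.minpoly_dvd_charpoly L))
  have hCp := aux_eq_prod hε L.charpoly hmonic hdeg hroot
  have hXmonic : (Polynomial.X ^ n - 1 : Polynomial K).Monic := by
    have h := Polynomial.monic_X_pow_sub_C (1 : K) (NeZero.ne n)
    simpa using h
  have hXdeg : (Polynomial.X ^ n - 1 : Polynomial K).natDegree = n := by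
    have h := Polynomial.natDegree_X_pow_sub_C (n := n) (r := (1 : K))
    simpa using h
  have hXn := aux_eq_prod hε (Polynomial.X ^ n - 1) hXmonic hXdeg
    (fun μ hμ => by simp [Polynomial.IsRoot, hμ])
  have hcharpoly : L.charpoly = Polynomial.X ^ n - 1 := hCp.trans hXn.symm
  refine ⟨hcharpoly, ?_, ?_, hLn⟩
  · intro μ
    constructor
    · intro h
      have hr := (Module.End.hasEigenvalue_iff_isRoot.mp h).dvd (LinearMap.minpoly_dvd_charpoly L)
      rw [hcharpoly] at hr
      have hμ : μ ^ n = 1 := by simpa [Polynomial.IsRoot, sub_eq_zero] using hr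
      obtain ⟨i, hi, rfl⟩ := hε.eq_pow_of_pow_eq_one hμ
      rcases Nat.eq_zero_or_pos i with rfl | hpos
      · exact ⟨n, by omega, le_rfl, by rw [pow_zero, hε.pow_eq_one]⟩
      · exact ⟨i, hpos, hi.le, rfl⟩
    · rintro ⟨p, hp1, hpn, rfl⟩
      exact hEigen _ (by rw [← pow_mul, mul_comm, pow_mul, hε.pow_eq_one, one_pow])
  · intro p hp1 hpn
    have hμ : (ε ^ p) ^ n = 1 := by rw [← pow_mul, mul_comm, pow_mul, hε.pow_eq_one, one_pow]
    have hspan : Module.End.eigenspace L (ε ^ p) = Submodule.span K {v (ε ^ p)} := by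
      apply le_antisymm
      · intro x hx
        rw [Module.End.mem_eigenspace_iff] at hx
        rw [Submodule.mem_span_singleton]
        refine ⟨x 0, ?_⟩
        have key : ∀ (k : ℕ) (hk : k < n), x ⟨k, hk⟩ = x 0 * v (ε ^ p) ⟨k, hk⟩ := by
          intro k
          induction k with
          | zero => intro hk; rw [show (⟨0, hk⟩ : Fin n) = 0 from rfl, hv0, mul_one]
          | succ k ih =>
            intro hk
            have hk' : k < n := by omega
            have hadd : (⟨k, hk'⟩ : Fin n) + 1 = ⟨k + 1, hk⟩ := by
              apply Fin.ext
              rw [Fin.val_add, Fin.val_one']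
              simp [Nat.mod_eq_of_lt (by omega : 1 < n), Nat.mod_eq_of_lt hk]
            have hstep : ∀ y : Fin n → K, L y = (ε ^ p) • y →
                y ⟨k + 1, hk⟩ = ε ^ p * y ⟨k, hk'⟩ * (c ⟨k + 1, hk⟩)⁻¹ := by
              intro y hy
              have h2 := congrFun hy ⟨k, hk'⟩
              rw [hL, hadd] at h2
              rw [eq_mul_inv_iff_mul_eq₀ (hcne _), mul_comm]
              simpa using h2
            rw [hstep x hx, hstep (v (ε ^ p)) (hLv _ hμ), ih hk']
            ring
        funext i
        have h := key i.val i.isLt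
        simpa using h.symm
      · rw [Submodule.span_singleton_le_iff_mem]
        exact Module.End.mem_eigenspace_iff.mpr (hLv _ hμ)
    rw [hspan]
    exact finrank_span_singleton (hvne _)
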